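/- Let λ = (1^n) and μ = (m). Then θ_{λ,μ} = m!·(n−1)!, i.e., the gcd of the coefficients of Y_{T^λ} Y_{(T^μ)^{+n}} Y_{T^λ + T^μ} in ℤS_{n+m} equals m!(n−1)!. -/

import Mathlib

open Finset Equiv MonoidAlgebra

namespace YS

variable {N : ℕ}

/-- The set of entries of a tableau `s` of shape `μ` with values in `Fin N`. -/
def entriesFinset (μ : YoungDiagram) (s : ↥μ.cells → Fin N) : Finset (Fin N) :=
  μ.cells.attach.image s

/-- The entries in row `i` of the tableau `s`. -/
def rowFinset (μ : YoungDiagram) (s : ↥μ.cells → Fin N) (i : ℕ) : Finset (Fin N) :=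
  (μ.cells.attach.filter (fun c => c.val.1 = i)).image s

/-- The entries in column `j` of the tableau `s`. -/
def colFinset (μ : YoungDiagram) (s : ↥μ.cells → Fin N) (j : ℕ) : Finset (Fin N) :=
  (μ.cells.attach.filter (fun c => c.val.2 = j)).image s

/-- The row stabilizer `R_s`: permutations fixing everything outside the entries of `s`
and permuting the entries within each row. -/
def rowStab (μ : YoungDiagram) (s : ↥μ.cells → Fin N) : Finset (Perm (Fin N)) :=
  univ.filter fun σ =>
    (∀ x, x ∉ entriesFinset μ s → σ x = x) ∧
    ∀ i ∈ μ.cells.image Prod.fst, ∀ x ∈ rowFinset μ s i, σ x ∈ rowFinset μ s i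

/-- The column stabilizer `C_s`. -/
def colStab (μ : YoungDiagram) (s : ↥μ.cells → Fin N) : Finset (Perm (Fin N)) :=
  univ.filter fun σ =>
    (∀ x, x ∉ entriesFinset μ s → σ x = x) ∧
    ∀ j ∈ μ.cells.image Prod.snd, ∀ x ∈ colFinset μ s j, σ x ∈ colFinset μ s j

/-- `{S} = ∑_{σ ∈ S} σ` in the integral group algebra. -/
noncomputable def sumElt (S : Finset (Perm (Fin N))) : MonoidAlgebra ℤ (Perm (Fin N)) :=
  ∑ σ ∈ S, MonoidAlgebra.single σ 1

/-- `[S] = ∑_{σ ∈ S} sgn(σ) σ` in the integral group algebra. -/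
noncomputable def altElt (S : Finset (Perm (Fin N))) : MonoidAlgebra ℤ (Perm (Fin N)) :=
  ∑ σ ∈ S, MonoidAlgebra.single σ ((Perm.sign σ : ℤˣ) : ℤ)

/-- The Young symmetrizer `Y_s = {R_s}[C_s]`. -/
noncomputable def youngSym (μ : YoungDiagram) (s : ↥μ.cells → Fin N) :
    MonoidAlgebra ℤ (Perm (Fin N)) :=
  sumElt (rowStab μ s) * altElt (colStab μ s)

/-- The row stabilizer `R_{s+t}` of the combined tableau: row `i` of `s+t` consists of
the entries of row `i` of `s` together with those of row `i` of `t`. -/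
def combRowStab (lam mu : YoungDiagram) (s : ↥lam.cells → Fin N) (t : ↥mu.cells → Fin N) :
    Finset (Perm (Fin N)) :=
  univ.filter fun σ =>
    (∀ x, x ∉ entriesFinset lam s ∪ entriesFinset mu t → σ x = x) ∧
    ∀ i ∈ lam.cells.image Prod.fst ∪ mu.cells.image Prod.fst,
      ∀ x ∈ rowFinset lam s i ∪ rowFinset mu t i, σ x ∈ rowFinset lam s i ∪ rowFinset mu t i

/-- The column stabilizer `C_{s+t} = C_s C_t` of the combined tableau: the columns of `s+t`
are exactly the columns of `s` together with the columns of `t`. -/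
def combColStab (lam mu : YoungDiagram) (s : ↥lam.cells → Fin N) (t : ↥mu.cells → Fin N) :
    Finset (Perm (Fin N)) :=
  univ.filter fun σ =>
    (∀ x, x ∉ entriesFinset lam s ∪ entriesFinset mu t → σ x = x) ∧
    (∀ j ∈ lam.cells.image Prod.snd, ∀ x ∈ colFinset lam s j, σ x ∈ colFinset lam s j) ∧
    (∀ j ∈ mu.cells.image Prod.snd, ∀ x ∈ colFinset mu t j, σ x ∈ colFinset mu t j)

/-- The Young symmetrizer `Y_{s+t}` of the combined tableau `s+t` of shape `λ+μ`. -/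
noncomputable def combYoungSym (lam mu : YoungDiagram) (s : ↥lam.cells → Fin N)
    (t : ↥mu.cells → Fin N) : MonoidAlgebra ℤ (Perm (Fin N)) :=
  sumElt (combRowStab lam mu s t) * altElt (combColStab lam mu s t)

/-- The (nonnegative) gcd of the coefficients of an element of the group algebra. -/
noncomputable def coeffGcd (f : MonoidAlgebra ℤ (Perm (Fin N))) : ℤ :=
  f.coeff.support.gcd f.coeff

end YS

/-- The column Young diagram `(1^n)`. -/
def colYD (n : ℕ) : YoungDiagram where
  cells := Finset.range n ×ˢ {0}
  isLowerSet := by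
    rintro ⟨i2, j2⟩ ⟨i1, j1⟩ ⟨hi, hj⟩ h
    simp only [Finset.coe_product, Set.mem_prod, Finset.mem_coe, Finset.mem_range,
      Finset.mem_singleton] at h ⊢
    omega

/-- The row Young diagram `(m)`. -/
def rowYD (m : ℕ) : YoungDiagram where
  cells := ({0} : Finset ℕ) ×ˢ Finset.range m
  isLowerSet := by
    rintro ⟨i2, j2⟩ ⟨i1, j1⟩ ⟨hi, hj⟩ h
    simp only [Finset.coe_product, Set.mem_prod, Finset.mem_coe, Finset.mem_range,
      Finset.mem_singleton] at h ⊢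
    omega

/-- The tableau `T^{(1^n)}` of shape `(1^n)` with entries `0, 1, …, n-1` (in `Fin (n+m)`),
reading down the unique column. -/
def colTab (n m : ℕ) : ↥(colYD n).cells → Fin (n + m) := fun c =>
  ⟨c.val.1, by
    have h := c.property
    simp only [colYD, Finset.mem_product, Finset.mem_range, Finset.mem_singleton] at h
    omega⟩

/-- The tableau `(T^{(m)})^{+n}` of shape `(m)` with entries `n, n+1, …, n+m-1`. -/
def rowTabShift (n m : ℕ) : ↥(rowYD m).cells → Fin (n + m) := fun c =>
  ⟨n + c.val.2, by
    have h := c.property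
    simp only [rowYD, Finset.mem_product, Finset.mem_range, Finset.mem_singleton] at h
    omega⟩



namespace ThetaAux
open YS

variable {n m : ℕ}

def Afin (n m : ℕ) : Finset (Fin (n+m)) := Finset.univ.filter (fun x => x.val < n)
def Bfin (n m : ℕ) : Finset (Fin (n+m)) := Finset.univ.filter (fun x => n ≤ x.val)

lemma mem_Afin {x : Fin (n+m)} : x ∈ Afin n m ↔ x.val < n := by simp [Afin]
lemma mem_Bfin {x : Fin (n+m)} : x ∈ Bfin n m ↔ n ≤ x.val := by simp [Bfin]

lemma mem_colYD {c : ℕ × ℕ} : c ∈ (colYD n).cells ↔ c.1 < n ∧ c.2 = 0 := by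
  show c ∈ Finset.range n ×ˢ {0} ↔ _
  rw [Finset.mem_product, Finset.mem_range, Finset.mem_singleton]

lemma mem_rowYD {c : ℕ × ℕ} : c ∈ (rowYD m).cells ↔ c.1 = 0 ∧ c.2 < m := by
  show c ∈ ({0} : Finset ℕ) ×ˢ Finset.range m ↔ _
  rw [Finset.mem_product, Finset.mem_range, Finset.mem_singleton]

lemma colTab_val (c : ↥(colYD n).cells) : (colTab n m c).val = c.val.1 := rfl
lemma rowTabShift_val (c : ↥(rowYD m).cells) : (rowTabShift n m c).val = n + c.val.2 := rfl

lemma entries_col {x : Fin (n+m)} :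
    x ∈ entriesFinset (colYD n) (colTab n m) ↔ x.val < n := by
  simp only [entriesFinset, Finset.mem_image, Finset.mem_attach, true_and]
  constructor
  · rintro ⟨⟨c, hc⟩, rfl⟩
    rw [mem_colYD] at hc
    simpa [colTab_val] using hc.1
  · intro hx
    exact ⟨⟨(x.val, 0), mem_colYD.2 ⟨hx, rfl⟩⟩, Fin.ext (by simp [colTab_val])⟩

lemma entries_row {x : Fin (n+m)} :
    x ∈ entriesFinset (rowYD m) (rowTabShift n m) ↔ n ≤ x.val := by
  simp only [entriesFinset, Finset.mem_image, Finset.mem_attach, true_and]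
  constructor
  · rintro ⟨⟨c, hc⟩, rfl⟩
    simp [rowTabShift_val]
  · intro hx
    have hlt := x.isLt
    refine ⟨⟨(0, x.val - n), mem_rowYD.2 ⟨rfl, by omega⟩⟩, Fin.ext ?_⟩
    rw [rowTabShift_val]
    simp; omega

lemma mem_rowFinset_col {i : ℕ} {x : Fin (n+m)} :
    x ∈ rowFinset (colYD n) (colTab n m) i ↔ (x.val = i ∧ i < n) := by
  simp only [rowFinset, Finset.mem_image, Finset.mem_filter, Finset.mem_attach, true_and]
  constructor
  · rintro ⟨⟨c, hc⟩, hfst, rfl⟩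
    rw [mem_colYD] at hc
    exact ⟨by rw [colTab_val]; exact hfst, hfst ▸ hc.1⟩
  · rintro ⟨hval, hi⟩
    exact ⟨⟨(i, 0), mem_colYD.2 ⟨hi, rfl⟩⟩, rfl, Fin.ext (by simp [colTab_val, hval])⟩

lemma mem_colFinset_col {j : ℕ} {x : Fin (n+m)} :
    x ∈ colFinset (colYD n) (colTab n m) j ↔ (x.val < n ∧ j = 0) := by
  simp only [colFinset, Finset.mem_image, Finset.mem_filter, Finset.mem_attach, true_and]
  constructor
  · rintro ⟨⟨c, hc⟩, hsnd, rfl⟩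
    rw [mem_colYD] at hc
    exact ⟨by rw [colTab_val]; exact hc.1, by rw [← hsnd]; exact hc.2⟩
  · rintro ⟨hval, rfl⟩
    exact ⟨⟨(x.val, 0), mem_colYD.2 ⟨hval, rfl⟩⟩, rfl, Fin.ext (by simp [colTab_val])⟩

lemma mem_rowFinset_row {i : ℕ} {x : Fin (n+m)} :
    x ∈ rowFinset (rowYD m) (rowTabShift n m) i ↔ (n ≤ x.val ∧ i = 0) := by
  simp only [rowFinset, Finset.mem_image, Finset.mem_filter, Finset.mem_attach, true_and]
  constructor
  · rintro ⟨⟨c, hc⟩, hfst, rfl⟩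
    rw [mem_rowYD] at hc
    exact ⟨by rw [rowTabShift_val]; omega, by rw [← hfst]; exact hc.1⟩
  · rintro ⟨hval, rfl⟩
    have hlt := x.isLt
    refine ⟨⟨(0, x.val - n), mem_rowYD.2 ⟨rfl, by omega⟩⟩, rfl, Fin.ext ?_⟩
    rw [rowTabShift_val]; simp; omega

lemma mem_colFinset_row {j : ℕ} {x : Fin (n+m)} :
    x ∈ colFinset (rowYD m) (rowTabShift n m) j ↔ (x.val = n + j ∧ j < m) := by
  simp only [colFinset, Finset.mem_image, Finset.mem_filter, Finset.mem_attach, true_and]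
  constructor
  · rintro ⟨⟨c, hc⟩, hsnd, rfl⟩
    rw [mem_rowYD] at hc
    exact ⟨by rw [rowTabShift_val, hsnd], hsnd ▸ hc.2⟩
  · rintro ⟨hval, hj⟩
    exact ⟨⟨(0, j), mem_rowYD.2 ⟨rfl, hj⟩⟩, rfl, Fin.ext (by rw [rowTabShift_val, hval])⟩

end ThetaAux

namespace ThetaAux
open YS
variable {N : ℕ}

def fixG (s : Finset (Fin N)) : Finset (Perm (Fin N)) :=
  univ.filter fun σ => ∀ x ∉ s, σ x = x

lemma mem_fixG {s : Finset (Fin N)} {σ : Perm (Fin N)} :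
    σ ∈ fixG s ↔ ∀ x ∉ s, σ x = x := by simp [fixG]

lemma mul_mem_fixG {s : Finset (Fin N)} {σ τ : Perm (Fin N)}
    (hσ : σ ∈ fixG s) (hτ : τ ∈ fixG s) : σ * τ ∈ fixG s := by
  rw [mem_fixG] at *
  intro x hx
  simp [Perm.mul_apply, hτ x hx, hσ x hx]

/-- sign as an integer -/
noncomputable def sgn (σ : Perm (Fin N)) : ℤ := ((Perm.sign σ : ℤˣ) : ℤ)

lemma sgn_mul (σ τ : Perm (Fin N)) : sgn (σ * τ) = sgn σ * sgn τ := by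
  simp [sgn, map_mul]

lemma single_one_mul_sumElt_fixG {s : Finset (Fin N)} {g : Perm (Fin N)} (hg : g ∈ fixG s) :
    MonoidAlgebra.single g (1:ℤ) * sumElt (fixG s) = sumElt (fixG s) := by
  unfold sumElt
  rw [Finset.mul_sum]
  simp_rw [MonoidAlgebra.single_mul_single, one_mul]
  refine Finset.sum_nbij' (fun τ => g * τ) (fun τ => g⁻¹ * τ) ?_ ?_ ?_ ?_ ?_
  · intro τ hτ; exact mul_mem_fixG hg hτ
  · intro τ hτ; exact mul_mem_fixG (by
      rw [mem_fixG] at hg ⊢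
      intro x hx
      conv_lhs => rw [← hg x hx]
      simp) hτ
  · intro τ _; group
  · intro τ _; group
  · intro τ _; rfl

lemma single_sgn_mul_altElt_fixG {s : Finset (Fin N)} {g : Perm (Fin N)} (hg : g ∈ fixG s) :
    MonoidAlgebra.single g ((Perm.sign g : ℤˣ) : ℤ) * altElt (fixG s) = altElt (fixG s) := by
  show MonoidAlgebra.single g (sgn g) * altElt (fixG s) = altElt (fixG s)
  unfold altElt
  rw [Finset.mul_sum]
  simp_rw [MonoidAlgebra.single_mul_single]
  have : ∀ τ : Perm (Fin N), MonoidAlgebra.single (g * τ) (sgn g * ((Perm.sign τ : ℤˣ) : ℤ))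
      = MonoidAlgebra.single (g * τ) ((Perm.sign (g * τ) : ℤˣ) : ℤ) := by
    intro τ; rw [show sgn g * ((Perm.sign τ : ℤˣ) : ℤ) = sgn (g * τ) from (sgn_mul g τ).symm]; rfl
  simp_rw [this]
  refine Finset.sum_nbij' (fun τ => g * τ) (fun τ => g⁻¹ * τ) ?_ ?_ ?_ ?_ ?_
  · intro τ hτ; exact mul_mem_fixG hg hτ
  · intro τ hτ; exact mul_mem_fixG (by
      rw [mem_fixG] at hg ⊢
      intro x hx
      conv_lhs => rw [← hg x hx]
      simp) hτ
  · intro τ _; group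
  · intro τ _; group
  · intro τ _; rfl

end ThetaAux

namespace ThetaAux
open YS
variable {N : ℕ}

lemma sumElt_def (S : Finset (Perm (Fin N))) :
    sumElt S = ∑ σ ∈ S, MonoidAlgebra.single σ (1:ℤ) := rfl

lemma altElt_def (S : Finset (Perm (Fin N))) :
    altElt S = ∑ σ ∈ S, MonoidAlgebra.single σ ((Perm.sign σ : ℤˣ) : ℤ) := rfl

lemma fixG_apply_mem {s : Finset (Fin N)} {σ : Perm (Fin N)}
    (hσ : σ ∈ fixG s) {x : Fin N} (hx : x ∈ s) : σ x ∈ s := by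
  by_contra h
  have h2 := (mem_fixG.1 hσ) (σ x) h
  have : σ x = x := σ.injective h2
  rw [this] at h
  exact h hx

lemma card_fixG (s : Finset (Fin N)) : (fixG s).card = s.card.factorial := by
  have e1 : {σ : Perm (Fin N) // σ ∈ fixG s} ≃ Perm {x : Fin N // x ∈ s} := by
    refine (Equiv.subtypeEquivRight ?_).trans (Equiv.Perm.subtypeEquivSubtypePerm _).symm
    intro σ; simp [mem_fixG]
  calc (fixG s).card = Fintype.card {σ : Perm (Fin N) // σ ∈ fixG s} := (Fintype.card_coe _).symm
    _ = Fintype.card (Perm {x : Fin N // x ∈ s}) := Fintype.card_congr e1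
    _ = (Fintype.card {x : Fin N // x ∈ s}).factorial := Fintype.card_perm
    _ = s.card.factorial := by rw [Fintype.card_coe]

lemma fixG_mono {s t : Finset (Fin N)} (h : s ⊆ t) : fixG s ⊆ fixG t := by
  intro σ hσ
  rw [mem_fixG] at *
  intro x hx
  exact hσ x (fun hxs => hx (h hxs))

lemma fixG_commute {s t : Finset (Fin N)} (hst : Disjoint s t) {α β : Perm (Fin N)}
    (hα : α ∈ fixG s) (hβ : β ∈ fixG t) : α * β = β * α := by
  ext x
  simp only [Perm.mul_apply]
  by_cases hxs : x ∈ s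
  · have hxt : x ∉ t := Finset.disjoint_left.1 hst hxs
    rw [mem_fixG.1 hβ x hxt, mem_fixG.1 hβ (α x) (Finset.disjoint_left.1 hst (fixG_apply_mem hα hxs))]
  · by_cases hxt : x ∈ t
    · rw [mem_fixG.1 hα x hxs, mem_fixG.1 hα (β x) (Finset.disjoint_right.1 hst (fixG_apply_mem hβ hxt))]
    · simp [mem_fixG.1 hα x hxs, mem_fixG.1 hβ x hxt]

lemma altElt_mul_sumElt_comm {s t : Finset (Fin N)} (hst : Disjoint s t) :
    sumElt (fixG t) * altElt (fixG s) = altElt (fixG s) * sumElt (fixG t) := by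
  unfold sumElt altElt
  rw [Finset.sum_mul_sum, Finset.sum_mul_sum]
  rw [Finset.sum_comm]
  refine Finset.sum_congr rfl fun α hα => Finset.sum_congr rfl fun β hβ => ?_
  rw [MonoidAlgebra.single_mul_single, MonoidAlgebra.single_mul_single,
    fixG_commute hst hα hβ, one_mul, mul_one]

lemma sumElt_subgroup_absorb {s t : Finset (Fin N)} (h : s ⊆ t) :
    sumElt (fixG s) * sumElt (fixG t) = (s.card.factorial : ℤ) • sumElt (fixG t) := by
  rw [sumElt_def (fixG s), Finset.sum_mul,
    Finset.sum_congr rfl (fun g hg => single_one_mul_sumElt_fixG (fixG_mono h hg)),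
    Finset.sum_const, card_fixG]
  simp

/-- the fiber portion of `altElt` over permutations sending `x0` to `a` -/
noncomputable def altFiber (s : Finset (Fin N)) (x0 a : Fin N) : MonoidAlgebra ℤ (Perm (Fin N)) :=
  ∑ σ ∈ (fixG s).filter (fun σ => σ x0 = a), MonoidAlgebra.single σ ((Perm.sign σ : ℤˣ) : ℤ)

lemma altElt_eq_sum_altFiber (s : Finset (Fin N)) {x0 : Fin N} (hx0 : x0 ∈ s) :
    altElt (fixG s) = ∑ a ∈ s, altFiber s x0 a := by
  unfold altElt altFiber
  rw [← Finset.sum_fiberwise_of_maps_to (g := fun σ => σ x0) (fun σ hσ => fixG_apply_mem hσ hx0)]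

lemma altFiber_mul_altElt (s : Finset (Fin N)) {x0 a : Fin N} (hx0 : x0 ∈ s) (ha : a ∈ s) :
    altFiber s x0 a * altElt (fixG s) =
      ((s.card - 1).factorial : ℤ) • altElt (fixG s) := by
  unfold altFiber
  rw [Finset.sum_mul,
    Finset.sum_congr rfl (fun g hg => single_sgn_mul_altElt_fixG (Finset.mem_filter.1 hg).1),
    Finset.sum_const]
  congr 1
  -- card of the fiber is (|s|-1)!
  have key : ∀ b ∈ s, ((fixG s).filter (fun σ => σ x0 = b)).card
      = ((fixG s).filter (fun σ => σ x0 = x0)).card := by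
    intro b hb
    by_cases hbx : b = x0
    · rw [hbx]
    · refine Finset.card_bij' (fun σ _ => Equiv.swap x0 b * σ) (fun σ _ => Equiv.swap x0 b * σ)
        ?_ ?_ ?_ ?_
      · intro σ hσ
        rw [Finset.mem_filter] at hσ ⊢
        have hswap : Equiv.swap x0 b ∈ fixG s := by
          rw [mem_fixG]
          intro x hx
          exact Equiv.swap_apply_of_ne_of_ne (fun h => hx (h ▸ hx0)) (fun h => hx (h ▸ hb))
        refine ⟨mul_mem_fixG hswap hσ.1, ?_⟩
        rw [Perm.mul_apply, hσ.2, Equiv.swap_apply_right]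
      · intro σ hσ
        rw [Finset.mem_filter] at hσ ⊢
        have hswap : Equiv.swap x0 b ∈ fixG s := by
          rw [mem_fixG]
          intro x hx
          exact Equiv.swap_apply_of_ne_of_ne (fun h => hx (h ▸ hx0)) (fun h => hx (h ▸ hb))
        refine ⟨mul_mem_fixG hswap hσ.1, ?_⟩
        rw [Perm.mul_apply, hσ.2, Equiv.swap_apply_left]
      · intro σ _; show swap x0 b * (swap x0 b * σ) = σ
        rw [← mul_assoc, Equiv.swap_mul_self, one_mul]
      · intro σ _; show swap x0 b * (swap x0 b * σ) = σ
        rw [← mul_assoc, Equiv.swap_mul_self, one_mul]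
  rw [key a ha]
  have : (fixG s).filter (fun σ => σ x0 = x0) = fixG (s.erase x0) := by
    ext σ
    rw [Finset.mem_filter, mem_fixG, mem_fixG]
    constructor
    · rintro ⟨h1, h2⟩ x hx
      by_cases hxx : x = x0
      · rw [hxx]; exact h2
      · exact h1 x (fun hxs => hx (Finset.mem_erase.2 ⟨hxx, hxs⟩))
    · intro h
      refine ⟨fun x hx => h x (fun hx' => hx (Finset.mem_of_mem_erase hx')), ?_⟩
      exact h x0 (fun hx' => (Finset.mem_erase.1 hx').1 rfl)
  rw [this, card_fixG, Finset.card_erase_of_mem hx0]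

end ThetaAux

namespace ThetaAux
open YS
variable {n m : ℕ}

lemma rowStab_col : rowStab (colYD n) (colTab n m) = {1} := by
  ext σ
  simp only [rowStab, Finset.mem_filter, Finset.mem_univ, true_and, Finset.mem_singleton]
  constructor
  · rintro ⟨h1, h2⟩
    ext x
    by_cases hx : x.val < n
    · have hi : x.val ∈ (colYD n).cells.image Prod.fst := by
        simp only [Finset.mem_image]
        exact ⟨(x.val, 0), mem_colYD.2 ⟨hx, rfl⟩, rfl⟩
      have hmem : x ∈ rowFinset (colYD n) (colTab n m) x.val := mem_rowFinset_col.2 ⟨rfl, hx⟩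
      have := h2 x.val hi x hmem
      rw [mem_rowFinset_col] at this
      rw [Perm.one_apply]
      exact this.1
    · rw [h1 x (fun h => hx (entries_col.1 h)), Perm.one_apply]
  · rintro rfl
    exact ⟨fun x _ => rfl, fun i _ x hx => hx⟩

lemma colStab_col : colStab (colYD n) (colTab n m) = fixG (Afin n m) := by
  ext σ
  simp only [colStab, Finset.mem_filter, Finset.mem_univ, true_and, mem_fixG]
  constructor
  · rintro ⟨h1, _⟩ x hx
    exact h1 x (fun h => hx (mem_Afin.2 (entries_col.1 h)))
  · intro h
    refine ⟨fun x hx => h x (fun h' => hx (entries_col.2 (mem_Afin.1 h'))), ?_⟩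
    intro j _ x hx
    rw [mem_colFinset_col] at hx ⊢
    refine ⟨?_, hx.2⟩
    have : σ x ∈ Afin n m := fixG_apply_mem (mem_fixG.2 h) (mem_Afin.2 hx.1)
    exact mem_Afin.1 this

lemma rowStab_row : rowStab (rowYD m) (rowTabShift n m) = fixG (Bfin n m) := by
  ext σ
  simp only [rowStab, Finset.mem_filter, Finset.mem_univ, true_and, mem_fixG]
  constructor
  · rintro ⟨h1, _⟩ x hx
    exact h1 x (fun h => hx (mem_Bfin.2 (entries_row.1 h)))
  · intro h
    refine ⟨fun x hx => h x (fun h' => hx (entries_row.2 (mem_Bfin.1 h'))), ?_⟩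
    intro i _ x hx
    rw [mem_rowFinset_row] at hx ⊢
    refine ⟨?_, hx.2⟩
    have : σ x ∈ Bfin n m := fixG_apply_mem (mem_fixG.2 h) (mem_Bfin.2 hx.1)
    exact mem_Bfin.1 this

lemma colStab_row : colStab (rowYD m) (rowTabShift n m) = {1} := by
  ext σ
  simp only [colStab, Finset.mem_filter, Finset.mem_univ, true_and, Finset.mem_singleton]
  constructor
  · rintro ⟨h1, h2⟩
    ext x
    by_cases hx : n ≤ x.val
    · have hlt := x.isLt
      have hj : x.val - n ∈ (rowYD m).cells.image Prod.snd := by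
        simp only [Finset.mem_image]
        exact ⟨(0, x.val - n), mem_rowYD.2 ⟨rfl, by omega⟩, rfl⟩
      have hmem : x ∈ colFinset (rowYD m) (rowTabShift n m) (x.val - n) :=
        mem_colFinset_row.2 ⟨by omega, by omega⟩
      have := h2 _ hj x hmem
      rw [mem_colFinset_row] at this
      rw [Perm.one_apply]
      omega
    · rw [h1 x (fun h => hx (entries_row.1 h)), Perm.one_apply]
  · rintro rfl
    exact ⟨fun x _ => rfl, fun j _ x hx => hx⟩

end ThetaAux

namespace ThetaAux
open YS
variable {n m : ℕ}

lemma combRowStab_eq (hn : 0 < n) :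
    combRowStab (colYD n) (rowYD m) (colTab n m) (rowTabShift n m) =
      fixG (insert (⟨0, by omega⟩ : Fin (n+m)) (Bfin n m)) := by
  ext σ
  simp only [combRowStab, Finset.mem_filter, Finset.mem_univ, true_and, mem_fixG]
  constructor
  · rintro ⟨h1, h2⟩ x hx
    rw [Finset.mem_insert, mem_Bfin] at hx
    push_neg at hx
    have hx0 : x.val ≠ 0 := fun h => hx.1 (Fin.ext h)
    have hxn : x.val < n := by omega
    have hi : x.val ∈ Finset.image Prod.fst (colYD n).cells ∪
        Finset.image Prod.fst (rowYD m).cells := by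
      apply Finset.mem_union_left
      simp only [Finset.mem_image]
      exact ⟨(x.val, 0), mem_colYD.2 ⟨hxn, rfl⟩, rfl⟩
    have hxmem : x ∈ rowFinset (colYD n) (colTab n m) x.val ∪
        rowFinset (rowYD m) (rowTabShift n m) x.val :=
      Finset.mem_union_left _ (mem_rowFinset_col.2 ⟨rfl, hxn⟩)
    have := h2 x.val hi x hxmem
    rw [Finset.mem_union, mem_rowFinset_col, mem_rowFinset_row] at this
    rcases this with h | h
    · exact Fin.ext h.1
    · omega
  · intro h
    have hσ : σ ∈ fixG (insert (⟨0, by omega⟩ : Fin (n+m)) (Bfin n m)) := mem_fixG.2 h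
    constructor
    · intro x hx
      exfalso
      rw [Finset.mem_union, entries_col, entries_row] at hx
      push_neg at hx
      omega
    · intro i _ x hx
      rw [Finset.mem_union, mem_rowFinset_col, mem_rowFinset_row] at hx ⊢
      have hC : x ∈ insert (⟨0, by omega⟩ : Fin (n+m)) (Bfin n m) ∨ σ x = x := by
        by_cases hxC : x ∈ insert (⟨0, by omega⟩ : Fin (n+m)) (Bfin n m)
        · exact Or.inl hxC
        · exact Or.inr (h x hxC)
      rcases hC with hC | hfix
      · have hσx : σ x ∈ insert (⟨0, by omega⟩ : Fin (n+m)) (Bfin n m) :=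
          fixG_apply_mem hσ hC
        rw [Finset.mem_insert, mem_Bfin] at hσx hC
        rcases hx with hx | hx
        · -- x.val = i, i < n; x ∈ C means x.val = 0 or n ≤ x.val, so i = 0
          have hi0 : i = 0 := by
            rcases hC with hC | hC
            · rw [← hx.1, hC]
            · omega
          rcases hσx with hσx | hσx
            
          · exact Or.inl ⟨by rw [hσx, hi0], hx.2⟩
          · exact Or.inr ⟨hσx, hi0⟩
        · -- n ≤ x.val, i = 0
          rcases hσx with hσx | hσx
          · exact Or.inl ⟨by rw [hσx, hx.2], by omega⟩
          · exact Or.inr ⟨hσx, hx.2⟩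
      · rw [hfix]; exact hx

lemma combColStab_eq :
    combColStab (colYD n) (rowYD m) (colTab n m) (rowTabShift n m) = fixG (Afin n m) := by
  ext σ
  simp only [combColStab, Finset.mem_filter, Finset.mem_univ, true_and, mem_fixG]
  constructor
  · rintro ⟨h1, h2, h3⟩ x hx
    rw [mem_Afin] at hx
    have hlt := x.isLt
    have hj : x.val - n ∈ Finset.image Prod.snd (rowYD m).cells := by
      simp only [Finset.mem_image]
      exact ⟨(0, x.val - n), mem_rowYD.2 ⟨rfl, by omega⟩, rfl⟩
    have hxmem : x ∈ colFinset (rowYD m) (rowTabShift n m) (x.val - n) :=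
      mem_colFinset_row.2 ⟨by omega, by omega⟩
    have := h3 _ hj x hxmem
    rw [mem_colFinset_row] at this
    exact Fin.ext (by omega)
  · intro h
    have hσ : σ ∈ fixG (Afin n m) := mem_fixG.2 h
    refine ⟨?_, ?_, ?_⟩
    · intro x hx
      exfalso
      rw [Finset.mem_union, entries_col, entries_row] at hx
      push_neg at hx
      omega
    · intro j _ x hx
      rw [mem_colFinset_col] at hx ⊢
      exact ⟨mem_Afin.1 (fixG_apply_mem hσ (mem_Afin.2 hx.1)), hx.2⟩
    · intro j _ x hx
      rw [mem_colFinset_row] at hx ⊢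
      have : σ x = x := h x (by rw [mem_Afin]; omega)
      rw [this]
      exact hx

end ThetaAux

namespace ThetaAux
open YS
variable {N : ℕ}

lemma sumElt_singleton_one : sumElt ({1} : Finset (Perm (Fin N))) = 1 := by
  rw [sumElt_def, Finset.sum_singleton, MonoidAlgebra.one_def]

lemma altElt_singleton_one : altElt ({1} : Finset (Perm (Fin N))) = 1 := by
  rw [altElt_def, Finset.sum_singleton, map_one]
  rw [MonoidAlgebra.one_def]
  norm_num

lemma swap_mem_fixG {s : Finset (Fin N)} {a b : Fin N} (ha : a ∈ s) (hb : b ∈ s) :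
    Equiv.swap a b ∈ fixG s := by
  rw [mem_fixG]
  intro x hx
  exact Equiv.swap_apply_of_ne_of_ne (fun h => hx (h ▸ ha)) (fun h => hx (h ▸ hb))

lemma sumElt_insert_coset {B : Finset (Fin N)} {x0 : Fin N} (hx0 : x0 ∉ B) :
    sumElt (fixG (insert x0 B)) =
      ∑ c ∈ insert x0 B, MonoidAlgebra.single (Equiv.swap x0 c) (1:ℤ) * sumElt (fixG B) := by
  have hsub : fixG B ⊆ fixG (insert x0 B) := fixG_mono (Finset.subset_insert _ _)
  simp only [sumElt_def, Finset.mul_sum, MonoidAlgebra.single_mul_single, one_mul]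
  rw [show (∑ c ∈ insert x0 B, ∑ h ∈ fixG B, MonoidAlgebra.single (Equiv.swap x0 c * h) (1:ℤ))
      = ∑ p ∈ (insert x0 B) ×ˢ fixG B, MonoidAlgebra.single (Equiv.swap x0 p.1 * p.2) (1:ℤ) from
    (Finset.sum_product (insert x0 B) (fixG B)
      (fun p => MonoidAlgebra.single (Equiv.swap x0 p.1 * p.2) (1:ℤ))).symm]
  refine Finset.sum_nbij' (s := fixG (insert x0 B)) (t := (insert x0 B) ×ˢ fixG B)
    (f := fun σ => MonoidAlgebra.single σ (1:ℤ))
    (g := fun p => MonoidAlgebra.single (Equiv.swap x0 p.1 * p.2) (1:ℤ))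
    (fun σ => (σ x0, Equiv.swap x0 (σ x0) * σ))
    (fun p => Equiv.swap x0 p.1 * p.2) ?_ ?_ ?_ ?_ ?_
  · intro σ hσ
    rw [Finset.mem_product]
    refine ⟨fixG_apply_mem hσ (Finset.mem_insert_self _ _), ?_⟩
    rw [mem_fixG]
    intro x hx
    by_cases hxx : x = x0
    · subst hxx
      simp [Equiv.swap_apply_right]
    · have hxC : x ∉ insert x0 B := by
        rw [Finset.mem_insert]
        push_neg
        exact ⟨hxx, hx⟩
      have hfix : σ x = x := mem_fixG.1 hσ x hxC
      have hne2 : x ≠ σ x0 := by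
        intro h
        have : σ x = σ x0 := by rw [hfix, ← h]
        exact hxx (σ.injective this)
      simp only [Perm.mul_apply, hfix]
      exact Equiv.swap_apply_of_ne_of_ne hxx hne2
  · intro p hp
    rw [Finset.mem_product] at hp
    exact mul_mem_fixG (swap_mem_fixG (Finset.mem_insert_self _ _) hp.1) (hsub hp.2)
  · intro σ _
    show Equiv.swap x0 (σ x0) * (Equiv.swap x0 (σ x0) * σ) = σ
    rw [← mul_assoc, Equiv.swap_mul_self, one_mul]
  · intro p hp
    rw [Finset.mem_product] at hp
    have h1 : (Equiv.swap x0 p.1 * p.2) x0 = p.1 := by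
      simp only [Perm.mul_apply]
      rw [mem_fixG.1 hp.2 x0 hx0, Equiv.swap_apply_left]
    refine Prod.ext h1 ?_
    show Equiv.swap x0 ((Equiv.swap x0 p.1 * p.2) x0) * (Equiv.swap x0 p.1 * p.2) = p.2
    rw [h1, ← mul_assoc, Equiv.swap_mul_self, one_mul]
  · intro σ _
    show MonoidAlgebra.single σ (1:ℤ) =
      MonoidAlgebra.single (Equiv.swap x0 (σ x0) * (Equiv.swap x0 (σ x0) * σ)) 1
    rw [← mul_assoc, Equiv.swap_mul_self, one_mul]

lemma altFiber_mul_swap {s : Finset (Fin N)} {x0 a b : Fin N} (hb : b ∉ s) :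
    altFiber s x0 a * MonoidAlgebra.single (Equiv.swap x0 b) (1:ℤ) =
      MonoidAlgebra.single (Equiv.swap a b) (1:ℤ) * altFiber s x0 a := by
  unfold altFiber
  rw [Finset.sum_mul, Finset.mul_sum]
  refine Finset.sum_congr rfl fun σ hσ => ?_
  rw [Finset.mem_filter] at hσ
  rw [MonoidAlgebra.single_mul_single, MonoidAlgebra.single_mul_single, one_mul, mul_one]
  congr 1
  have hσb : σ b = b := mem_fixG.1 hσ.1 b hb
  have := Equiv.swap_apply_apply σ x0 b
  rw [hσ.2, hσb] at this
  rw [this]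
  group

lemma altElt_mul_altElt (s : Finset (Fin N)) :
    altElt (fixG s) * altElt (fixG s) = (s.card.factorial : ℤ) • altElt (fixG s) := by
  nth_rewrite 1 [altElt_def]
  rw [Finset.sum_mul,
    Finset.sum_congr rfl (fun g hg => single_sgn_mul_altElt_fixG hg),
    Finset.sum_const, card_fixG]
  simp

lemma altElt_swap_altElt {s : Finset (Fin N)} {x0 b : Fin N} (hx0 : x0 ∈ s) (hb : b ∉ s) :
    altElt (fixG s) * MonoidAlgebra.single (Equiv.swap x0 b) (1:ℤ) * altElt (fixG s) =
      ((s.card - 1).factorial : ℤ) •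
        ((∑ a ∈ s, MonoidAlgebra.single (Equiv.swap a b) (1:ℤ)) * altElt (fixG s)) := by
  nth_rewrite 1 [altElt_eq_sum_altFiber s hx0]
  rw [Finset.sum_mul, Finset.sum_mul]
  rw [Finset.sum_congr rfl (fun a ha => ?_)]
  · rw [Finset.sum_mul, Finset.smul_sum]
  · rw [altFiber_mul_swap hb, mul_assoc, altFiber_mul_altElt s hx0 ha, mul_smul_comm]

lemma D_apply_zero {s t : Finset (Fin N)} (hst : Disjoint s t) {π : Perm (Fin N)} {x : Fin N}
    (hx : x ∈ s) (hπ : π x ∉ s) : (altElt (fixG s) * sumElt (fixG t)).coeff π = 0 := by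
  rw [altElt_def, sumElt_def, Finset.sum_mul_sum]
  simp_rw [MonoidAlgebra.single_mul_single, mul_one]
  rw [MonoidAlgebra.coeff_sum, Finset.sum_apply', Finset.sum_congr rfl fun α _ => by rw [MonoidAlgebra.coeff_sum, Finsupp.finset_sum_apply]]
  refine Finset.sum_eq_zero fun α hα => Finset.sum_eq_zero fun β hβ => ?_
  refine Finsupp.single_eq_of_ne' fun h => ?_
  apply hπ
  have hβx : β x = x := mem_fixG.1 hβ x (Finset.disjoint_left.1 hst hx)
  have : (α * β) x = α x := by rw [Perm.mul_apply, hβx]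
  rw [← h, this]
  exact fixG_apply_mem hα hx

lemma D_apply_one {s t : Finset (Fin N)} (hst : Disjoint s t) :
    (altElt (fixG s) * sumElt (fixG t)).coeff 1 = 1 := by
  rw [altElt_def, sumElt_def, Finset.sum_mul_sum]
  simp_rw [MonoidAlgebra.single_mul_single, mul_one]
  rw [MonoidAlgebra.coeff_sum, Finset.sum_apply', Finset.sum_congr rfl fun α _ => by rw [MonoidAlgebra.coeff_sum, Finsupp.finset_sum_apply]]
  have hinner : ∀ α ∈ fixG s, (∑ β ∈ fixG t,
      (MonoidAlgebra.single (α * β) ((Perm.sign α : ℤˣ) : ℤ)).coeff (1 : Perm (Fin N)))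
      = if α⁻¹ ∈ fixG t then ((Perm.sign α : ℤˣ) : ℤ) else 0 := by
    intro α _
    rw [Finset.sum_congr rfl (fun β _ => ?_)]
    · exact Finset.sum_ite_eq' (fixG t) α⁻¹ (fun _ => ((Perm.sign α : ℤˣ) : ℤ))
    · rw [MonoidAlgebra.coeff_single, Finsupp.single_apply]
      congr 1
      rw [show (α * β = 1) = (β = α⁻¹) from propext ?_]
      constructor
      · intro h
        exact eq_inv_of_mul_eq_one_right h
      · rintro rfl
        group
  rw [Finset.sum_congr rfl hinner]
  rw [Finset.sum_eq_single_of_mem 1 (by rw [mem_fixG]; intro x _; rfl)]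
  · simp [mem_fixG]
  · intro α hα hne
    rw [if_neg]
    intro hinv
    apply hne
    ext x
    by_cases hxs : x ∈ s
    · have hxt : x ∉ t := Finset.disjoint_left.1 hst hxs
      have h2 := mem_fixG.1 hinv x hxt
      have hx : α x = x := by nth_rewrite 1 [← h2]; simp
      simp [hx]
    · simp [mem_fixG.1 hα x hxs]

lemma card_Afin {n m : ℕ} : (Afin n m).card = n := by
  have : Afin n m = (Finset.range n).attachFin (fun i hi => by
      rw [Finset.mem_range] at hi; omega) := by
    ext x
    rw [mem_Afin, Finset.mem_attachFin, Finset.mem_range]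
  rw [this, Finset.card_attachFin, Finset.card_range]

lemma card_Bfin {n m : ℕ} : (Bfin n m).card = m := by
  have : Bfin n m = (Finset.Ico n (n+m)).attachFin (fun i hi => by
      rw [Finset.mem_Ico] at hi; omega) := by
    ext x
    rw [mem_Bfin, Finset.mem_attachFin, Finset.mem_Ico]
    have := x.isLt
    omega
  rw [this, Finset.card_attachFin, Nat.card_Ico]
  omega

end ThetaAux

namespace ThetaAux
open YS

theorem theta_aux (n m : ℕ) (hn : 0 < n) (hm : 0 < m) :
    coeffGcd (youngSym (colYD n) (colTab n m) * youngSym (rowYD m) (rowTabShift n m) *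
        combYoungSym (colYD n) (rowYD m) (colTab n m) (rowTabShift n m)) =
      (m.factorial * (n - 1).factorial : ℤ) := by
  classical
  set x0 : Fin (n+m) := ⟨0, by omega⟩ with hx0def
  set xn : Fin (n+m) := ⟨n, by omega⟩ with hxndef
  set A := Afin n m with hAdef
  set B := Bfin n m with hBdef
  set C : Finset (Fin (n+m)) := insert x0 B with hCdef
  have hx0A : x0 ∈ A := mem_Afin.2 hn
  have hx0B : x0 ∉ B := by rw [hBdef, mem_Bfin]; simp [hx0def]; omega
  have hxnB : xn ∈ B := mem_Bfin.2 (le_refl n)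
  have hxnA : xn ∉ A := by rw [hAdef, mem_Afin]; simp [hxndef]
  have hdisj : Disjoint A B := by
    rw [Finset.disjoint_left]
    intro x hxA hxB
    rw [hAdef, mem_Afin] at hxA
    rw [hBdef, mem_Bfin] at hxB
    omega
  have hBA : ∀ b ∈ B, b ∉ A := fun b hb => Finset.disjoint_right.1 hdisj hb
  -- identify the young symmetrizers
  have hY1 : youngSym (colYD n) (colTab n m) = altElt (fixG A) := by
    rw [youngSym, rowStab_col, colStab_col, sumElt_singleton_one, one_mul]
  have hY2 : youngSym (rowYD m) (rowTabShift n m) = sumElt (fixG B) := by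
    rw [youngSym, rowStab_row, colStab_row, altElt_singleton_one, mul_one]
  have hY3 : combYoungSym (colYD n) (rowYD m) (colTab n m) (rowTabShift n m) =
      sumElt (fixG C) * altElt (fixG A) := by
    rw [combYoungSym, combRowStab_eq hn, combColStab_eq]
  rw [hY1, hY2, hY3]
  -- the core element
  set D : MonoidAlgebra ℤ (Perm (Fin (n+m))) := altElt (fixG A) * sumElt (fixG B) with hDdef
  set W : MonoidAlgebra ℤ (Perm (Fin (n+m))) :=
    (n : ℤ) • D + ∑ b ∈ B, ∑ a ∈ A, MonoidAlgebra.single (Equiv.swap a b) (1:ℤ) * D with hWdef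
  have hcardA : A.card = n := card_Afin
  have hcardB : B.card = m := card_Bfin
  have hfac : (n.factorial : ℤ) = (n : ℤ) * ((n-1).factorial : ℤ) := by
    rcases n with _ | k
    · omega
    · simp [Nat.factorial_succ]
  -- main algebraic identity
  have hmain : altElt (fixG A) * sumElt (fixG B) * (sumElt (fixG C) * altElt (fixG A)) =
      ((m.factorial : ℤ) * ((n-1).factorial : ℤ)) • W := by
    have hBC : B ⊆ C := Finset.subset_insert _ _
    have habsorb : sumElt (fixG B) * sumElt (fixG C) = (m.factorial : ℤ) • sumElt (fixG C) := by
      rw [sumElt_subgroup_absorb hBC, hcardB]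
    have hcomm : sumElt (fixG B) * altElt (fixG A) = altElt (fixG A) * sumElt (fixG B) :=
      altElt_mul_sumElt_comm hdisj
    calc altElt (fixG A) * sumElt (fixG B) * (sumElt (fixG C) * altElt (fixG A))
        = altElt (fixG A) * (sumElt (fixG B) * sumElt (fixG C)) * altElt (fixG A) := by
          rw [mul_assoc, mul_assoc, mul_assoc]
      _ = (m.factorial : ℤ) • (altElt (fixG A) * sumElt (fixG C) * altElt (fixG A)) := by
          rw [habsorb, mul_smul_comm, smul_mul_assoc]
      _ = ((m.factorial : ℤ) * ((n-1).factorial : ℤ)) • W := ?_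
    rw [← smul_smul]
    congr 1
    -- altElt A * sumElt C * altElt A = (n-1)! • W
    rw [sumElt_insert_coset hx0B]
    rw [Finset.mul_sum, Finset.sum_mul]
    rw [Finset.sum_congr rfl (fun c _ => show altElt (fixG A) *
        (MonoidAlgebra.single (Equiv.swap x0 c) (1:ℤ) * sumElt (fixG B)) * altElt (fixG A)
        = altElt (fixG A) * MonoidAlgebra.single (Equiv.swap x0 c) (1:ℤ) * altElt (fixG A) *
          sumElt (fixG B) from by
      rw [← mul_assoc, mul_assoc (altElt (fixG A) * MonoidAlgebra.single (Equiv.swap x0 c) 1),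
        hcomm, ← mul_assoc])]
    rw [Finset.sum_insert hx0B]
    have hx0term : altElt (fixG A) * MonoidAlgebra.single (Equiv.swap x0 x0) (1:ℤ) *
        altElt (fixG A) * sumElt (fixG B)
        = ((n-1).factorial : ℤ) • ((n : ℤ) • D) := by
      rw [Equiv.swap_self]
      rw [show MonoidAlgebra.single (Equiv.refl (Fin (n+m)) : Perm (Fin (n+m))) (1:ℤ) =
        (1 : MonoidAlgebra ℤ (Perm (Fin (n+m)))) from rfl]
      rw [mul_one, altElt_mul_altElt, hcardA, hfac, hDdef]
      rw [smul_mul_assoc, smul_smul, mul_comm]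
    have hbterm : ∀ b ∈ B, altElt (fixG A) * MonoidAlgebra.single (Equiv.swap x0 b) (1:ℤ) *
        altElt (fixG A) * sumElt (fixG B)
        = ((n-1).factorial : ℤ) • (∑ a ∈ A, MonoidAlgebra.single (Equiv.swap a b) (1:ℤ) * D) := by
      intro b hb
      rw [altElt_swap_altElt hx0A (hBA b hb), hcardA, smul_mul_assoc, Finset.sum_mul,
        Finset.sum_mul]
      congr 1
      refine Finset.sum_congr rfl fun a _ => ?_
      rw [mul_assoc, ← hDdef]
    rw [hx0term, Finset.sum_congr rfl hbterm, ← Finset.smul_sum, ← smul_add, hWdef]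
  rw [hmain]
  -- now the gcd computation
  set c : ℤ := (m.factorial : ℤ) * ((n-1).factorial : ℤ) with hcdef
  have hcpos : 0 < c := by positivity
  set τ : Perm (Fin (n+m)) := Equiv.swap x0 xn with hτdef
  -- coefficient of τ in W is 1
  have hDτ : D.coeff τ = 0 := by
    refine D_apply_zero hdisj hx0A ?_
    rw [hτdef, Equiv.swap_apply_left]
    exact hxnA
  have hterm : ∀ b ∈ B, ∀ a ∈ A,
      D.coeff (Equiv.swap a b * τ) = if a = x0 ∧ b = xn then 1 else 0 := by
    intro b hb a ha
    by_cases hax : a = x0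
    · by_cases hbx : b = xn
      · subst hax; subst hbx
        rw [if_pos ⟨rfl, rfl⟩, hτdef, Equiv.swap_mul_self]
        exact D_apply_one hdisj
      · rw [if_neg (by tauto)]
        refine D_apply_zero hdisj hx0A ?_
        have h1 : τ x0 = xn := by rw [hτdef]; exact Equiv.swap_apply_left _ _
        have h2 : Equiv.swap a b xn = xn := by
          refine Equiv.swap_apply_of_ne_of_ne ?_ ?_
          · intro h; exact hxnA (h ▸ ha)
          · exact fun h => hbx (h.symm)
        rw [Perm.mul_apply, h1, h2]
        exact hxnA
    · rw [if_neg (by tauto)]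
      refine D_apply_zero hdisj ha ?_
      have haA : a.val < n := mem_Afin.1 ha
      have h1 : τ a = a := by
        rw [hτdef]
        refine Equiv.swap_apply_of_ne_of_ne hax ?_
        intro h; exact hxnA (h ▸ ha)
      by_cases hbx : b = xn
      · subst hbx
        rw [Perm.mul_apply, h1, Equiv.swap_apply_left]
        exact hxnA
      · rw [Perm.mul_apply, h1, Equiv.swap_apply_left]
        exact hBA b hb
  have hWτ : W.coeff τ = 1 := by
    rw [hWdef, MonoidAlgebra.coeff_add, Finsupp.add_apply, MonoidAlgebra.coeff_smul, Finsupp.smul_apply, hDτ, smul_zero, zero_add]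
    rw [MonoidAlgebra.coeff_sum, Finsupp.finset_sum_apply, Finset.sum_congr rfl (fun b hb => by rw [MonoidAlgebra.coeff_sum, Finsupp.finset_sum_apply])]
    have : ∀ b ∈ B, ∀ a ∈ A, (MonoidAlgebra.single (Equiv.swap a b) (1:ℤ) * D).coeff τ
        = if a = x0 ∧ b = xn then 1 else 0 := by
      intro b hb a ha
      rw [MonoidAlgebra.coeff_single_mul_apply, one_mul, Equiv.swap_inv, hterm b hb a ha]
    rw [Finset.sum_congr rfl (fun b hb => Finset.sum_congr rfl (fun a ha => this b hb a ha))]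
    simp_rw [ite_and]
    rw [Finset.sum_congr rfl (fun b _ =>
      Finset.sum_ite_eq' A x0 (fun _ => if b = xn then (1:ℤ) else 0))]
    simp only [hx0A, if_true]
    rw [Finset.sum_ite_eq' B xn (fun _ => (1:ℤ)), if_pos hxnB]
  -- coefficient of τ in the product is c, all coefficients divisible by c
  have happly : ∀ σ : Perm (Fin (n+m)), (c • W).coeff σ = c * W.coeff σ := fun σ => by
    rw [MonoidAlgebra.coeff_smul, Finsupp.smul_apply, smul_eq_mul]
  have hτc : (c • W).coeff τ = c := by rw [happly, hWτ, mul_one]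
  have hτsupp : τ ∈ (c • W).coeff.support := by
    rw [Finsupp.mem_support_iff, hτc]
    omega
  have hdvd1 : (c • W).coeff.support.gcd ⇑(c • W).coeff ∣ c := by
    have h := Finset.gcd_dvd (f := ⇑(c • W).coeff) hτsupp
    rwa [hτc] at h
  have hdvd2 : c ∣ (c • W).coeff.support.gcd ⇑(c • W).coeff :=
    Finset.dvd_gcd (fun σ _ => by rw [happly]; exact Dvd.intro _ rfl)
  have hnonneg : 0 ≤ (c • W).coeff.support.gcd ⇑(c • W).coeff := by
    rw [← Finset.normalize_gcd, ← Int.abs_eq_normalize]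
    exact abs_nonneg _
  rw [coeffGcd]
  rw [Int.dvd_antisymm hnonneg (le_of_lt hcpos) hdvd1 hdvd2]

end ThetaAux

open YS in
/-- `θ_{(1^n),(m)} = m!(n-1)!`. -/
theorem theta_column_row (n m : ℕ) (hn : 0 < n) (hm : 0 < m) :
    coeffGcd (youngSym (colYD n) (colTab n m) * youngSym (rowYD m) (rowTabShift n m) *
        combYoungSym (colYD n) (rowYD m) (colTab n m) (rowTabShift n m)) =
      (m.factorial * (n - 1).factorial : ℤ) :=
  ThetaAux.theta_aux n m hn hm
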